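/- Let k ≥ 1 and let B = {y ∈ ℝᵏ : ‖y‖ < 1} be the open unit ball. The map p : ℝ × B → S^{k+1} defined by p(t, y) = (√(1 − ‖y‖²) · cos t, y₁, …, y_k, √(1 − ‖y‖²) · sin t) is a covering map onto the subspace {x ∈ S^{k+1} : (x₁, x_{k+2}) ≠ (0,0)}, and its domain ℝ × B is simply connected; hence ℝ × B is the universal cover of the complement S^{k+1} ∖ S^{k−1} of the totally geodesic codimension-two subsphere S^{k−1} = {x ∈ S^{k+1} : x₁ = x_{k+2} = 0}. -/

import Mathlib

/-- The complement in `S^{k+1} ⊂ ℝ^{k+2}` of the totally geodesic codimension-two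
subsphere `S^{k-1} = {x ∈ S^{k+1} : x₁ = x_{k+2} = 0}`, as a topological space. -/
abbrev SphereComplement (k : ℕ) : Type :=
  {x : EuclideanSpace ℝ (Fin (k + 2)) //
    ‖x‖ = 1 ∧ (x 0, x (Fin.last (k + 1))) ≠ ((0 : ℝ), (0 : ℝ))}


open Set Function AddCircle

open Bundle

variable {p : ℝ}

/-- Trivialization of the quotient `ℝ → AddCircle p` over the complement of `↑a`. -/
noncomputable def addCircleTriv (hp : 0 < p) (a : ℝ) :
    Trivialization ℤ ((↑) : ℝ → AddCircle p) where
  toFun t := (↑t, toIcoDiv hp a t)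
  invFun q := haveI : Fact (0 < p) := ⟨hp⟩; ((equivIco p a q.1 : ℝ) + q.2 * p)
  source := ((↑) : ℝ → AddCircle p) ⁻¹' {(a : AddCircle p)}ᶜ
  target := {(a : AddCircle p)}ᶜ ×ˢ univ
  open_source := (isOpen_compl_singleton).preimage (AddCircle.continuous_mk' p)
  open_target := (isOpen_compl_singleton).prod isOpen_univ
  map_source' t ht := ⟨ht, trivial⟩
  map_target' q hq := by
    haveI : Fact (0 < p) := ⟨hp⟩
    have : ((((equivIco p a q.1 : ℝ) + q.2 * p : ℝ)) : AddCircle p) = q.1 := by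
      rw [AddCircle.coe_add]
      have h2 : ((q.2 * p : ℝ) : AddCircle p) = 0 := by
        rw [AddCircle.coe_eq_zero_iff]
        exact ⟨q.2, by rw [zsmul_eq_mul]⟩
      rw [h2, add_zero]
      exact (equivIco p a).symm_apply_apply q.1
    simpa [this] using hq.1
  left_inv' t ht := by
    haveI : Fact (0 < p) := ⟨hp⟩
    show ((equivIco p a (↑t) : ℝ) + (toIcoDiv hp a t : ℝ) * p) = t
    have : (equivIco p a (↑t) : ℝ) = toIcoMod hp a t := by
      simp [equivIco, QuotientAddGroup.equivIcoMod_coe]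
    rw [this, ← zsmul_eq_mul, toIcoMod_add_toIcoDiv_zsmul]
  right_inv' q hq := by
    haveI : Fact (0 < p) := ⟨hp⟩
    have h2 : ((q.2 * p : ℝ) : AddCircle p) = 0 := by
      rw [AddCircle.coe_eq_zero_iff]; exact ⟨q.2, by rw [zsmul_eq_mul]⟩
    have hcoe : ((((equivIco p a q.1 : ℝ) + q.2 * p : ℝ)) : AddCircle p) = q.1 := by
      rw [AddCircle.coe_add, h2, add_zero]
      exact (equivIco p a).symm_apply_apply q.1
    refine Prod.ext hcoe ?_
    show toIcoDiv hp a ((equivIco p a q.1 : ℝ) + q.2 * p) = q.2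
    rw [← zsmul_eq_mul, toIcoDiv_add_zsmul]
    have hmem : (equivIco p a q.1 : ℝ) - (0 : ℤ) • p ∈ Ico a (a + p) := by
      simpa using (equivIco p a q.1).2
    rw [toIcoDiv_eq_of_sub_zsmul_mem_Ico hp hmem, zero_add]
  continuousOn_toFun := by
    haveI : Fact (0 < p) := ⟨hp⟩
    apply ContinuousOn.prodMk (AddCircle.continuous_mk' p).continuousOn
    intro t ht
    have ht' : ((t : ℝ) : AddCircle p) ≠ ↑a := ht
    have hfun : ∀ s : ℝ, ((toIcoDiv hp a s : ℝ)) = (s - toIcoMod hp a s) / p := by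
      intro s
      rw [eq_div_iff hp.ne', toIcoMod, zsmul_eq_mul]
      ring
    have hcast : ContinuousWithinAt (fun s : ℝ => ((toIcoDiv hp a s : ℝ)))
        (((↑) : ℝ → AddCircle p) ⁻¹' {(a : AddCircle p)}ᶜ) t := by
      simp only [hfun]
      exact ((continuousWithinAt_id.sub
        ((continuousAt_toIcoMod hp a (AddCommGroup.not_modEq_iff_ne_mod_zmultiples.mpr ht')).continuousWithinAt)).div_const p)
    have heq : ∀ᶠ s in nhdsWithin t (((↑) : ℝ → AddCircle p) ⁻¹' {(a : AddCircle p)}ᶜ),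
        toIcoDiv hp a s = toIcoDiv hp a t := by
      have := hcast (Metric.ball_mem_nhds ((toIcoDiv hp a t : ℝ)) one_pos)
      filter_upwards [this] with s hs
      have : |((toIcoDiv hp a s : ℝ)) - ((toIcoDiv hp a t : ℝ))| < 1 := by
        simpa [Real.dist_eq] using hs
      have h5 : |toIcoDiv hp a s - toIcoDiv hp a t| < 1 := by exact_mod_cast this
      have := Int.abs_lt_one_iff.mp h5
      omega
    exact (continuousWithinAt_const (b := toIcoDiv hp a t)).congr_of_eventuallyEq heq rfl
  continuousOn_invFun := by
    haveI : Fact (0 < p) := ⟨hp⟩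
    apply ContinuousOn.add
    · intro q hq
      exact ((continuousAt_subtype_val.comp (continuousAt_equivIco p a hq.1)).comp
        continuousAt_fst).continuousWithinAt
    · exact (Continuous.comp (by exact continuous_of_discreteTopology)
        continuous_snd).continuousOn.mul continuousOn_const
  baseSet := {(a : AddCircle p)}ᶜ
  open_baseSet := isOpen_compl_singleton
  source_eq := rfl
  target_eq := rfl
  proj_toFun t _ := rfl


theorem exists_ne_addCircle (hp : 0 < p) (x : AddCircle p) : ∃ a : ℝ, x ≠ (a : AddCircle p) := by
  induction x using QuotientAddGroup.induction_on with
  | H b =>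
    refine ⟨b + p / 2, fun h => ?_⟩
    have h2 : ((p / 2 : ℝ) : AddCircle p) = 0 := by
      have h3 : ((b + p / 2 : ℝ) : AddCircle p) - ↑b = 0 := by rw [← h, sub_self]
      rwa [← AddCircle.coe_sub, show b + p / 2 - b = p / 2 by ring] at h3
    rw [AddCircle.coe_eq_zero_iff] at h2
    obtain ⟨n, hn⟩ := h2
    rw [zsmul_eq_mul] at hn
    have h4 : (2 * (n : ℝ) - 1) * p = 0 := by linarith
    have h5 : (2 * (n : ℝ) - 1) = 0 := by
      rcases mul_eq_zero.mp h4 with h | h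
      · exact h
      · exact absurd h hp.ne'
    have h6 : ((2 * n - 1 : ℤ) : ℝ) = 0 := by push_cast; linarith
    have h7 : (2 * n - 1 : ℤ) = 0 := by exact_mod_cast h6
    omega

theorem isCoveringMap_addCircle (hp : 0 < p) : IsCoveringMap ((↑) : ℝ → AddCircle p) := by
  apply IsCoveringMap.mk _ (fun _ => ℤ)
    (fun x => addCircleTriv hp (Classical.choose (exists_ne_addCircle hp x)))
  intro x
  exact Classical.choose_spec (exists_ne_addCircle hp x)

open Set Function

variable {E X B Y : Type*} [TopologicalSpace E] [TopologicalSpace X] [TopologicalSpace B]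
  [TopologicalSpace Y] {f : E → X}

/-- Transfer a trivialization along the product with the identity. -/
noncomputable def Bundle.Trivialization.prodId {I : Type*} [TopologicalSpace I]
    (t : Trivialization I f) : Trivialization I (Prod.map f (id : B → B)) where
  toOpenPartialHomeomorph := (t.toOpenPartialHomeomorph.prod (OpenPartialHomeomorph.refl B)).transHomeomorph
    ((Homeomorph.prodAssoc X I B).trans
      (((Homeomorph.refl X).prodCongr (Homeomorph.prodComm I B)).trans
        (Homeomorph.prodAssoc X B I).symm))
  baseSet := t.baseSet ×ˢ univ
  open_baseSet := t.open_baseSet.prod isOpen_univ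
  source_eq := by
    ext ⟨e, b⟩
    simp [t.source_eq]
  target_eq := by
    ext ⟨⟨x, b⟩, i⟩
    simp [t.target_eq, Homeomorph.prodAssoc, Prod.map]
  proj_toFun := by
    rintro ⟨e, b⟩ he
    have h1 : e ∈ t.source := by
      simpa [t.source_eq] using he
    exact congrArg (fun z => (z, b)) (t.proj_toFun e h1)

theorem IsCoveringMap.prodMap_id (hf : IsCoveringMap f) :
    IsCoveringMap (Prod.map f (id : B → B)) := by
  intro q
  rcases isEmpty_or_nonempty (f ⁻¹' {q.1}) with h | h
  · haveI : IsEmpty (Prod.map f (id : B → B) ⁻¹' {q}) :=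
      ⟨fun ⟨⟨e, b⟩, he⟩ => isEmptyElim (α := f ⁻¹' {q.1}) ⟨e, congrArg Prod.fst he⟩⟩
    obtain ⟨_, U, hxU, hU, hfU, H, hH⟩ := hf q.1
    refine .of_preimage_eq_empty _ ((hU.prod isOpen_univ).mem_nhds ⟨hxU, trivial⟩) ?_
    ext ⟨e, b⟩
    simp only [Set.mem_preimage, Set.mem_empty_iff_false, iff_false, Prod.map, Set.mem_prod]
    intro he
    exact isEmptyElim (H ⟨e, he.1⟩).2
  · haveI := (hf q.1).1
    exact (IsEvenlyCovered.of_trivialization (t := ((hf q.1).toTrivialization).prodId)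
      ⟨(hf q.1).mem_toTrivialization_baseSet, trivial⟩).to_isEvenlyCovered_preimage

/-- Transfer a trivialization along a homeomorphism of the base. -/
noncomputable def Bundle.Trivialization.compHomeomorphBase {I : Type*} [TopologicalSpace I]
    (t : Trivialization I f) (h : X ≃ₜ Y) : Trivialization I (⇑h ∘ f) where
  toOpenPartialHomeomorph := t.toOpenPartialHomeomorph.transHomeomorph
    (h.prodCongr (Homeomorph.refl I))
  baseSet := ⇑h.symm ⁻¹' t.baseSet
  open_baseSet := t.open_baseSet.preimage h.symm.continuous
  source_eq := by
    ext e
    simp [t.source_eq]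
  target_eq := by
    ext ⟨y, i⟩
    simp [t.target_eq]
  proj_toFun := by
    intro e he
    have h1 : e ∈ t.source := he
    exact congrArg h (t.proj_toFun e h1)

theorem IsCoveringMap.compHomeomorph (hf : IsCoveringMap f) (h : X ≃ₜ Y) :
    IsCoveringMap (⇑h ∘ f) := by
  exact hf.homeomorph_comp h

open Set Function Complex Metric


namespace Stmt9

variable {k : ℕ}

/-- The vector `(c₁, y₁, …, y_k, c₂)`. -/
noncomputable def vec (c₁ c₂ : ℝ) (y : EuclideanSpace ℝ (Fin k)) :
    EuclideanSpace ℝ (Fin (k + 2)) :=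
  WithLp.toLp 2 (Fin.cons c₁ (Fin.snoc y.ofLp c₂))

@[simp] theorem vec_zero (c₁ c₂ : ℝ) (y : EuclideanSpace ℝ (Fin k)) :
    vec c₁ c₂ y 0 = c₁ := rfl

@[simp] theorem vec_mid (c₁ c₂ : ℝ) (y : EuclideanSpace ℝ (Fin k)) (i : Fin k) :
    vec c₁ c₂ y i.castSucc.succ = y i := by
  simp [vec, Fin.cons_succ, Fin.snoc_castSucc]

@[simp] theorem vec_last (c₁ c₂ : ℝ) (y : EuclideanSpace ℝ (Fin k)) :
    vec c₁ c₂ y (Fin.last (k + 1)) = c₂ := by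
  rw [vec, PiLp.toLp_apply, ← Fin.succ_last, Fin.cons_succ, Fin.snoc_last]

theorem sum_sq (x : EuclideanSpace ℝ (Fin (k + 2))) :
    ∑ j, x j ^ 2 = x 0 ^ 2 + (∑ i : Fin k, x i.castSucc.succ ^ 2)
      + x (Fin.last (k + 1)) ^ 2 := by
  rw [Fin.sum_univ_succ, Fin.sum_univ_castSucc, Fin.succ_last]
  ring

theorem norm_sq_eq {n : ℕ} (x : EuclideanSpace ℝ (Fin n)) : ‖x‖ ^ 2 = ∑ j, x j ^ 2 := by
  rw [EuclideanSpace.norm_eq, Real.sq_sqrt (by positivity)]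
  simp [sq_abs]

noncomputable def fwdFun (k : ℕ)
    (q : Circle × (Metric.ball (0 : EuclideanSpace ℝ (Fin k)) 1)) :
    EuclideanSpace ℝ (Fin (k + 2)) :=
  vec (Real.sqrt (1 - ‖(q.2 : EuclideanSpace ℝ (Fin k))‖ ^ 2) * ((q.1 : ℂ)).re)
      (Real.sqrt (1 - ‖(q.2 : EuclideanSpace ℝ (Fin k))‖ ^ 2) * ((q.1 : ℂ)).im)
      (q.2 : EuclideanSpace ℝ (Fin k))

theorem fwd_mem (q : Circle × (Metric.ball (0 : EuclideanSpace ℝ (Fin k)) 1)) :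
    ‖fwdFun k q‖ = 1 ∧
      (fwdFun k q 0, fwdFun k q (Fin.last (k + 1))) ≠ ((0 : ℝ), (0 : ℝ)) := by
  obtain ⟨z, y, hy⟩ := q
  have hy1 : ‖(⟨y, hy⟩ : Metric.ball (0 : EuclideanSpace ℝ (Fin k)) 1).1‖ < 1 :=
    mem_ball_zero_iff.mp hy
  set c := Real.sqrt (1 - ‖y‖ ^ 2) with hc
  have hylt : ‖y‖ < 1 := hy1
  have h1 : (0 : ℝ) < 1 - ‖y‖ ^ 2 := by nlinarith [norm_nonneg y]
  have hc2 : c ^ 2 = 1 - ‖y‖ ^ 2 := Real.sq_sqrt h1.le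
  have hcpos : 0 < c := Real.sqrt_pos.mpr h1
  have hz : ((z : ℂ)).re ^ 2 + ((z : ℂ)).im ^ 2 = 1 := by
    have := Circle.normSq_coe z
    rw [normSq_apply] at this
    nlinarith [this]
  have hsum : ‖fwdFun k ⟨z, ⟨y, hy⟩⟩‖ ^ 2 = 1 := by
    rw [norm_sq_eq, sum_sq]
    simp only [fwdFun, vec_zero, vec_mid, vec_last]
    have hyn : ∑ i : Fin k, y i ^ 2 = ‖y‖ ^ 2 := (norm_sq_eq y).symm
    rw [hyn]
    nlinarith [hc2, hz]
  constructor
  · have := Real.sqrt_sq (norm_nonneg (fwdFun k ⟨z, ⟨y, hy⟩⟩))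
    rw [← this, hsum, Real.sqrt_one]
  · intro h
    rw [Prod.mk.injEq] at h
    simp only [fwdFun, vec_zero, vec_last] at h
    have hre : ((z : ℂ)).re = 0 := by
      rcases mul_eq_zero.mp h.1 with h' | h'
      · exact absurd h' hcpos.ne'
      · exact h'
    have him : ((z : ℂ)).im = 0 := by
      rcases mul_eq_zero.mp h.2 with h' | h'
      · exact absurd h' hcpos.ne'
      · exact h'
    rw [hre, him] at hz
    norm_num at hz

noncomputable def fwd (k : ℕ)
    (q : Circle × (Metric.ball (0 : EuclideanSpace ℝ (Fin k)) 1)) : SphereComplement k :=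
  ⟨fwdFun k q, fwd_mem q⟩

theorem fwd_coe_zero (q : Circle × (Metric.ball (0 : EuclideanSpace ℝ (Fin k)) 1)) :
    (fwd k q : EuclideanSpace ℝ (Fin (k + 2))) 0 =
      Real.sqrt (1 - ‖(q.2 : EuclideanSpace ℝ (Fin k))‖ ^ 2) * ((q.1 : ℂ)).re := rfl

theorem fwd_coe_mid (q : Circle × (Metric.ball (0 : EuclideanSpace ℝ (Fin k)) 1)) (i : Fin k) :
    (fwd k q : EuclideanSpace ℝ (Fin (k + 2))) i.castSucc.succ =
      (q.2 : EuclideanSpace ℝ (Fin k)) i := by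
  show fwdFun k q i.castSucc.succ = (q.2 : EuclideanSpace ℝ (Fin k)) i
  rw [fwdFun, vec_mid]

theorem fwd_coe_last (q : Circle × (Metric.ball (0 : EuclideanSpace ℝ (Fin k)) 1)) :
    (fwd k q : EuclideanSpace ℝ (Fin (k + 2))) (Fin.last (k + 1)) =
      Real.sqrt (1 - ‖(q.2 : EuclideanSpace ℝ (Fin k))‖ ^ 2) * ((q.1 : ℂ)).im := by
  show fwdFun k q (Fin.last (k + 1)) =
    Real.sqrt (1 - ‖(q.2 : EuclideanSpace ℝ (Fin k))‖ ^ 2) * ((q.1 : ℂ)).im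
  rw [fwdFun, vec_last]

/-! ### The inverse map -/

noncomputable def bwdC (x : SphereComplement k) : ℂ :=
  ((x.1 0 : ℝ) : ℂ) + ((x.1 (Fin.last (k + 1)) : ℝ) : ℂ) * Complex.I

@[simp] theorem bwdC_re (x : SphereComplement k) : (bwdC x).re = x.1 0 := by
  simp [bwdC]

@[simp] theorem bwdC_im (x : SphereComplement k) :
    (bwdC x).im = x.1 (Fin.last (k + 1)) := by
  simp [bwdC]

theorem bwdC_ne (x : SphereComplement k) : bwdC x ≠ 0 := by
  intro h
  apply x.2.2
  rw [Prod.mk.injEq]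
  constructor
  · have := congrArg Complex.re h
    simpa using this
  · have := congrArg Complex.im h
    simpa using this

noncomputable def bwdY (x : SphereComplement k) : EuclideanSpace ℝ (Fin k) :=
  WithLp.toLp 2 fun i => x.1 i.castSucc.succ

theorem abs_bwdC_sq (x : SphereComplement k) :
    ‖bwdC x‖ ^ 2 = x.1 0 ^ 2 + x.1 (Fin.last (k + 1)) ^ 2 := by
  rw [Complex.sq_norm, normSq_apply, bwdC_re, bwdC_im]
  ring

theorem abs_bwdC_pos (x : SphereComplement k) : 0 < ‖bwdC x‖ :=
  norm_pos_iff.mpr (bwdC_ne x)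

theorem norm_bwdY_sq (x : SphereComplement k) :
    ‖bwdY x‖ ^ 2 = 1 - (x.1 0 ^ 2 + x.1 (Fin.last (k + 1)) ^ 2) := by
  have h1 : ‖x.1‖ ^ 2 = 1 := by rw [x.2.1]; norm_num
  rw [norm_sq_eq] at h1
  rw [sum_sq] at h1
  have h2 : ‖bwdY x‖ ^ 2 = ∑ i : Fin k, x.1 i.castSucc.succ ^ 2 := by
    rw [norm_sq_eq]; rfl
  rw [h2]; linarith

theorem norm_bwdY_lt (x : SphereComplement k) : ‖bwdY x‖ < 1 := by
  have h1 := norm_bwdY_sq x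
  have h2 := abs_bwdC_sq x
  have h3 := abs_bwdC_pos x
  nlinarith [norm_nonneg (bwdY x), sq_nonneg ‖bwdC x‖]

noncomputable def bwdZ (x : SphereComplement k) : ℂ :=
  ((‖bwdC x‖⁻¹ : ℝ) : ℂ) * bwdC x

theorem bwdZ_mem (x : SphereComplement k) : ‖bwdZ x‖ = 1 := by
  rw [bwdZ, norm_mul, Complex.norm_real, norm_inv, norm_norm,
    inv_mul_cancel₀ (abs_bwdC_pos x).ne']

noncomputable def bwd (k : ℕ) (x : SphereComplement k) :
    Circle × (Metric.ball (0 : EuclideanSpace ℝ (Fin k)) 1) :=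
  (⟨bwdZ x, mem_sphere_zero_iff_norm.mpr (by exact bwdZ_mem x)⟩,
   ⟨bwdY x, mem_ball_zero_iff.mpr (norm_bwdY_lt x)⟩)


theorem left_inv (q : Circle × (Metric.ball (0 : EuclideanSpace ℝ (Fin k)) 1)) :
    bwd k (fwd k q) = q := by
  obtain ⟨z, y, hy⟩ := q
  have hylt : ‖y‖ < 1 := mem_ball_zero_iff.mp hy
  set c := Real.sqrt (1 - ‖y‖ ^ 2) with hcdef
  have h1 : (0 : ℝ) < 1 - ‖y‖ ^ 2 := by nlinarith [norm_nonneg y]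
  have hcpos : 0 < c := Real.sqrt_pos.mpr h1
  have hC : bwdC (fwd k ⟨z, ⟨y, hy⟩⟩) = (c : ℂ) * (z : ℂ) := by
    apply Complex.ext
    · rw [bwdC_re, fwd_coe_zero]
      simp [Complex.mul_re, hcdef]
    · rw [bwdC_im, fwd_coe_last]
      simp [Complex.mul_im, hcdef]
  have habs : ‖bwdC (fwd k ⟨z, ⟨y, hy⟩⟩)‖ = c := by
    rw [hC, norm_mul, Complex.norm_real, Real.norm_eq_abs, Circle.norm_coe, mul_one,
      abs_of_pos hcpos]
  have hZ : bwdZ (fwd k ⟨z, ⟨y, hy⟩⟩) = (z : ℂ) := by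
    rw [bwdZ, habs, hC, ← mul_assoc, ← Complex.ofReal_mul,
      inv_mul_cancel₀ hcpos.ne', Complex.ofReal_one, one_mul]
  have hY : bwdY (fwd k ⟨z, ⟨y, hy⟩⟩) = y := by
    ext i
    show fwdFun k ⟨z, ⟨y, hy⟩⟩ i.castSucc.succ = y i
    simp [fwdFun]
  refine Prod.ext ?_ ?_
  · exact Subtype.ext hZ
  · exact Subtype.ext hY

theorem right_inv (x : SphereComplement k) : fwd k (bwd k x) = x := by
  set r := ‖bwdC x‖ with hrdef
  have hrpos : 0 < r := abs_bwdC_pos x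
  have hc : Real.sqrt (1 - ‖bwdY x‖ ^ 2) = r := by
    rw [norm_bwdY_sq, show (1 : ℝ) - (1 - (x.1 0 ^ 2 + x.1 (Fin.last (k + 1)) ^ 2))
        = x.1 0 ^ 2 + x.1 (Fin.last (k + 1)) ^ 2 by ring,
      ← abs_bwdC_sq, Real.sqrt_sq (norm_nonneg _)]
  have hzre : (bwdZ x).re = r⁻¹ * x.1 0 := by
    simp [bwdZ, Complex.mul_re, hrdef]
  have hzim : (bwdZ x).im = r⁻¹ * x.1 (Fin.last (k + 1)) := by
    simp [bwdZ, Complex.mul_im, hrdef]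
  apply Subtype.ext
  ext j
  have hnorm : ‖((bwd k x).2 : EuclideanSpace ℝ (Fin k))‖ = ‖bwdY x‖ := rfl
  refine Fin.cases ?_ (fun i => ?_) j
  · rw [show ((fwd k (bwd k x) : SphereComplement k) : EuclideanSpace ℝ (Fin (k + 2))) 0 =
        Real.sqrt (1 - ‖bwdY x‖ ^ 2) * (bwdZ x).re from fwd_coe_zero _]
    rw [hc, hzre]
    field_simp
  · refine Fin.lastCases ?_ (fun i' => ?_) i
    · rw [Fin.succ_last]
      rw [show ((fwd k (bwd k x) : SphereComplement k) : EuclideanSpace ℝ (Fin (k + 2)))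
          (Fin.last (k + 1)) = Real.sqrt (1 - ‖bwdY x‖ ^ 2) * (bwdZ x).im from fwd_coe_last _]
      rw [hc, hzim]
      field_simp
    · rw [show ((fwd k (bwd k x) : SphereComplement k) : EuclideanSpace ℝ (Fin (k + 2)))
          i'.castSucc.succ = bwdY x i' from fwd_coe_mid _ i']
      rfl

theorem continuous_fwd : Continuous (fwd k) := by
  apply Continuous.subtype_mk
  show Continuous fun q : Circle × (Metric.ball (0 : EuclideanSpace ℝ (Fin k)) 1) =>
    fwdFun k q
  have hc : Continuous fun q : Circle × (Metric.ball (0 : EuclideanSpace ℝ (Fin k)) 1) =>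
      Real.sqrt (1 - ‖(q.2 : EuclideanSpace ℝ (Fin k))‖ ^ 2) :=
    Real.continuous_sqrt.comp (continuous_const.sub
      ((continuous_subtype_val.comp continuous_snd).norm.pow 2))
  have hre : Continuous fun q : Circle × (Metric.ball (0 : EuclideanSpace ℝ (Fin k)) 1) =>
      (((q.1 : Circle) : ℂ)).re :=
    Complex.continuous_re.comp (continuous_induced_dom.comp continuous_fst)
  have him : Continuous fun q : Circle × (Metric.ball (0 : EuclideanSpace ℝ (Fin k)) 1) =>
      (((q.1 : Circle) : ℂ)).im :=
    Complex.continuous_im.comp (continuous_induced_dom.comp continuous_fst)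
  have hpi : Continuous fun q : Circle × (Metric.ball (0 : EuclideanSpace ℝ (Fin k)) 1) =>
      (fwdFun k q : Fin (k + 2) → ℝ) := by
    apply continuous_pi
    intro j
    refine Fin.cases ?_ (fun i => ?_) j
    · simp only [fwdFun, vec, Fin.cons_zero]
      exact hc.mul hre
    · simp only [fwdFun, vec, Fin.cons_succ]
      refine Fin.lastCases ?_ (fun i' => ?_) i
      · simp only [Fin.snoc_last]
        exact hc.mul him
      · simp only [Fin.snoc_castSucc]
        exact (EuclideanSpace.proj i').continuous.comp
          (continuous_subtype_val.comp continuous_snd)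
  exact (PiLp.continuous_toLp 2 (fun _ : Fin (k + 2) => ℝ)).comp hpi

theorem continuous_bwd : Continuous (bwd k) := by
  have hx0 : Continuous fun x : SphereComplement k => x.1 0 :=
    (EuclideanSpace.proj (0 : Fin (k + 2))).continuous.comp continuous_subtype_val
  have hxl : Continuous fun x : SphereComplement k => x.1 (Fin.last (k + 1)) :=
    (EuclideanSpace.proj (Fin.last (k + 1))).continuous.comp continuous_subtype_val
  have hw : Continuous (bwdC (k := k)) :=
    (Complex.continuous_ofReal.comp hx0).add
      ((Complex.continuous_ofReal.comp hxl).mul continuous_const)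
  have hr : Continuous fun x : SphereComplement k => ‖bwdC x‖ :=
    continuous_norm.comp hw
  have hrinv : Continuous fun x : SphereComplement k => (‖bwdC x‖)⁻¹ :=
    hr.inv₀ fun x => (abs_bwdC_pos x).ne'
  have hz : Continuous (bwdZ (k := k)) :=
    (Complex.continuous_ofReal.comp hrinv).mul hw
  have hy : Continuous (bwdY (k := k)) := by
    have hpi : Continuous fun x : SphereComplement k => (bwdY x : Fin k → ℝ) :=
      continuous_pi fun i => (EuclideanSpace.proj i.castSucc.succ).continuous.comp
        continuous_subtype_val
    exact (PiLp.continuous_toLp 2 (fun _ : Fin k => ℝ)).comp hpi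
  exact (hz.subtype_mk _).prodMk (hy.subtype_mk _)

/-- The homeomorphism `Circle × B ≃ₜ S^{k+1} ∖ S^{k-1}`. -/
noncomputable def sphereHomeo (k : ℕ) :
    Circle × (Metric.ball (0 : EuclideanSpace ℝ (Fin k)) 1) ≃ₜ SphereComplement k where
  toFun := fwd k
  invFun := bwd k
  left_inv := left_inv
  right_inv := right_inv
  continuous_toFun := continuous_fwd
  continuous_invFun := continuous_bwd

end Stmt9

set_option maxHeartbeats 1000000 in
/-- The map `p(t, y) = (√(1-‖y‖²)·cos t, y₁, …, y_k, √(1-‖y‖²)·sin t)`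
is a covering map of `ℝ × B` (with `B ⊂ ℝᵏ` the open unit ball) onto
`S^{k+1} ∖ S^{k-1} = {x ∈ S^{k+1} : (x₁, x_{k+2}) ≠ (0,0)}`, and `ℝ × B` is simply
connected; hence `ℝ × B` is the universal cover of `S^{k+1} ∖ S^{k-1}`. -/
theorem stmt_9 (k : ℕ) (hk : 1 ≤ k) :
    ∃ p : ℝ × (Metric.ball (0 : EuclideanSpace ℝ (Fin k)) 1) → SphereComplement k,
      (∀ (t : ℝ) (y : Metric.ball (0 : EuclideanSpace ℝ (Fin k)) 1),
        ((p (t, y) : EuclideanSpace ℝ (Fin (k + 2))) 0 =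
            Real.sqrt (1 - ‖(y : EuclideanSpace ℝ (Fin k))‖ ^ 2) * Real.cos t) ∧
        (∀ i : Fin k, (p (t, y) : EuclideanSpace ℝ (Fin (k + 2))) i.castSucc.succ =
            (y : EuclideanSpace ℝ (Fin k)) i) ∧
        ((p (t, y) : EuclideanSpace ℝ (Fin (k + 2))) (Fin.last (k + 1)) =
            Real.sqrt (1 - ‖(y : EuclideanSpace ℝ (Fin k))‖ ^ 2) * Real.sin t)) ∧
      Function.Surjective p ∧ IsCoveringMap p ∧
      SimplyConnectedSpace (ℝ × (Metric.ball (0 : EuclideanSpace ℝ (Fin k)) 1)) := by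
  classical
  refine ⟨fun q => Stmt9.fwd k (Circle.exp q.1, q.2), ?_, ?_, ?_, ?_⟩
  · intro t y
    refine ⟨?_, fun i => ?_, ?_⟩
    · rw [Stmt9.fwd_coe_zero]
      congr 1
      rw [Circle.coe_exp, Complex.exp_ofReal_mul_I_re]
    · exact Stmt9.fwd_coe_mid _ i
    · rw [Stmt9.fwd_coe_last]
      congr 1
      rw [Circle.coe_exp, Complex.exp_ofReal_mul_I_im]
  · intro x
    refine ⟨(Complex.arg ((Stmt9.bwd k x).1 : ℂ), (Stmt9.bwd k x).2), ?_⟩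
    have h1 : Circle.exp (Complex.arg ((Stmt9.bwd k x).1 : ℂ)) = (Stmt9.bwd k x).1 :=
      Circle.exp_arg _
    show Stmt9.fwd k (Circle.exp (Complex.arg ((Stmt9.bwd k x).1 : ℂ)), (Stmt9.bwd k x).2) = x
    rw [h1]
    exact Stmt9.right_inv x
  · have h2pi : (0 : ℝ) < 2 * Real.pi := Real.two_pi_pos
    have hcov := ((isCoveringMap_addCircle h2pi).prodMap_id
        (B := (Metric.ball (0 : EuclideanSpace ℝ (Fin k)) 1 : Set _))).compHomeomorph
      ((AddCircle.homeomorphCircle'.prodCongr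
        (Homeomorph.refl (Metric.ball (0 : EuclideanSpace ℝ (Fin k)) 1 : Set _))).trans
          (Stmt9.sphereHomeo k))
    exact hcov
  · haveI h1 : ContractibleSpace
        (↥((Set.univ : Set ℝ) ×ˢ Metric.ball (0 : EuclideanSpace ℝ (Fin k)) 1)) := by
      apply Convex.contractibleSpace
      · exact convex_univ.prod (convex_ball (0 : EuclideanSpace ℝ (Fin k)) 1)
      · exact ⟨(0, 0), by simp⟩
    haveI : ContractibleSpace (ℝ × (Metric.ball (0 : EuclideanSpace ℝ (Fin k)) 1)) :=
      (((Homeomorph.Set.prod (Set.univ : Set ℝ)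
          (Metric.ball (0 : EuclideanSpace ℝ (Fin k)) 1)).trans
        ((Homeomorph.Set.univ ℝ).prodCongr (Homeomorph.refl _))).symm).contractibleSpace_iff.mpr
        ‹_›
    infer_instance
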